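/- Let G be a group, n ≥ 1, and g ∈ G^n. The Young subgroup B_{Q^g}, generated by all Birman–Ko–Lee generators a_{ij} with g_i = g_j, is contained in the stabilizer of g under the Hurwitz action of B_n on G^n. -/
import Mathlib


/-- Defining relations of the braid group on `n` strands: the Artin generators are
`σ_0, …, σ_{n-2}` (`0`-based), indexed by `Fin (n-1)`. -/
def braidRels (n : ℕ) : Set (FreeGroup (Fin (n - 1))) :=
  {r | ∃ i j : Fin (n - 1),
    (((j : ℕ) = (i : ℕ) + 1) ∧
      r = FreeGroup.of i * FreeGroup.of j * FreeGroup.of i *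
        (FreeGroup.of j * FreeGroup.of i * FreeGroup.of j)⁻¹) ∨
    (((i : ℕ) + 2 ≤ (j : ℕ)) ∧
      r = FreeGroup.of i * FreeGroup.of j * (FreeGroup.of j * FreeGroup.of i)⁻¹)}

/-- The braid group on `n` strands, as a presented group. -/
abbrev BraidGroup (n : ℕ) := PresentedGroup (braidRels n)

/-- The Artin generator `σ_i` of the braid group (`0`-based index `i : Fin (n-1)`). -/
def braidGen {n : ℕ} (i : Fin (n - 1)) : BraidGroup n := PresentedGroup.of i

/-- The Artin generator `σ_k` for a natural number index `k` (`0`-based);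
equal to `1` if `k` is out of range. -/
def braidGen' (n k : ℕ) : BraidGroup n :=
  if h : k < n - 1 then braidGen ⟨k, h⟩ else 1

/-- The Birman–Ko–Lee generator `a_{ij}` (`0`-based): for `i < j`,
`a_{ij} = σ_i σ_{i+1} ⋯ σ_{j-2} σ_{j-1} σ_{j-2}⁻¹ ⋯ σ_{i+1}⁻¹ σ_i⁻¹`. -/
def bkl (n i j : ℕ) : BraidGroup n :=
  (((List.range (j - 1 - i)).map fun t => braidGen' n (i + t)).prod) *
    braidGen' n (j - 1) *
    (((List.range (j - 1 - i)).map fun t => braidGen' n (i + t)).prod)⁻¹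

/-- The strand index `i` as an element of `Fin n` (from `i : Fin (n-1)`). -/
def finLo {n : ℕ} (i : Fin (n - 1)) : Fin n := ⟨i, by have := i.isLt; omega⟩

/-- The strand index `i+1` as an element of `Fin n` (from `i : Fin (n-1)`). -/
def finHi {n : ℕ} (i : Fin (n - 1)) : Fin n := ⟨(i : ℕ) + 1, by have := i.isLt; omega⟩

/-- The Hurwitz move corresponding to the braid generator `σ_i`:
`σ_i · (g_1,…,g_n) = (g_1,…,g_{i-1}, g_{i+1}, g_{i+1}⁻¹ g_i g_{i+1}, g_{i+2},…,g_n)`. -/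
def hurwitzMove {G : Type*} [Group G] {n : ℕ} (i : Fin (n - 1)) (g : Fin n → G) :
    Fin n → G := fun k =>
  if k = finLo i then g (finHi i)
  else if k = finHi i then (g (finHi i))⁻¹ * g (finLo i) * g (finHi i)
  else g k

-- aux: a hurwitz move fixes x if the two entries agree
lemma hurwitzMove_fix {G : Type*} [Group G] {n : ℕ} (i : Fin (n - 1)) (x : Fin n → G)
    (h : x (finLo i) = x (finHi i)) : hurwitzMove i x = x := by
  funext k
  unfold hurwitzMove
  split_ifs with h1 h2
  · rw [h1, h]
  · rw [h2, ← h]; group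
  · rfl

-- the intermediate tuple after m inverse moves
def Htup {G : Type*} [Group G] {n : ℕ} (g : Fin n → G) (i : Fin n) (m : ℕ) :
    Fin n → G := fun k =>
  if (i : ℕ) ≤ (k : ℕ) ∧ (k : ℕ) < (i : ℕ) + m then
    g i * (if h : (k : ℕ) + 1 < n then g ⟨(k : ℕ) + 1, h⟩ else 1) * (g i)⁻¹
  else if (k : ℕ) = (i : ℕ) + m then g i else g k

lemma prod_Htup {G : Type*} [Group G] {n : ℕ}
    (ρ : BraidGroup n →* Equiv.Perm (Fin n → G))
    (hρ : ∀ (i : Fin (n - 1)) (x : Fin n → G), ρ (braidGen i) x = hurwitzMove i x)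
    (g : Fin n → G) (i j : Fin n) (hij : (i : ℕ) < (j : ℕ)) :
    ∀ m, m ≤ (j : ℕ) - 1 - (i : ℕ) →
      ρ (((List.range m).map fun t => braidGen' n ((i : ℕ) + t)).prod) (Htup g i m) = g := by
  have hjn : (j : ℕ) < n := j.isLt
  intro m hm
  induction m with
  | zero =>
    simp only [List.range_zero, List.map_nil, List.prod_nil, map_one, Equiv.Perm.coe_one, id]
    funext k
    unfold Htup
    by_cases h1 : (i : ℕ) ≤ (k : ℕ) ∧ (k : ℕ) < (i : ℕ) + 0
    · exact absurd h1 (by omega)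
    · rw [if_neg h1]
      by_cases h2 : (k : ℕ) = (i : ℕ) + 0
      · rw [if_pos h2]; exact congrArg g (Fin.ext (by omega)).symm
      · rw [if_neg h2]
  | succ m ih =>
    have hm' : m ≤ (j : ℕ) - 1 - (i : ℕ) := by omega
    have hlt : (i : ℕ) + m < n - 1 := by omega
    rw [List.range_succ, List.map_append, List.prod_append, List.map_singleton,
      List.prod_singleton, map_mul, Equiv.Perm.mul_apply]
    have hgen : braidGen' n ((i : ℕ) + m) = braidGen ⟨(i : ℕ) + m, hlt⟩ := dif_pos hlt
    rw [hgen, hρ]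
    have key : hurwitzMove ⟨(i : ℕ) + m, hlt⟩ (Htup g i (m + 1)) = Htup g i m := by
      funext k
      unfold hurwitzMove Htup finLo finHi
      by_cases h1 : k = (⟨(i : ℕ) + m, by omega⟩ : Fin n)
      · rw [if_pos h1]
        have hk : (k : ℕ) = (i : ℕ) + m := by rw [h1]
        simp only
        rw [if_neg (by omega), if_pos (by omega), if_neg (by omega), if_pos (by omega)]
      · rw [if_neg h1]
        have hk1 : (k : ℕ) ≠ (i : ℕ) + m := fun h => h1 (Fin.ext h)
        by_cases h2 : k = (⟨(i : ℕ) + m + 1, by omega⟩ : Fin n)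
        · rw [if_pos h2]
          have hk : (k : ℕ) = (i : ℕ) + m + 1 := by rw [h2]
          simp only
          rw [if_neg (by omega), if_pos (by omega), if_pos (by omega),
            if_neg (by omega), if_neg (by omega)]
          have hn1 : (i : ℕ) + m + 1 < n := by omega
          rw [dif_pos hn1]
          have : k = (⟨(i : ℕ) + m + 1, hn1⟩ : Fin n) := Fin.ext hk
          rw [this]
          group
        · rw [if_neg h2]
          have hk2 : (k : ℕ) ≠ (i : ℕ) + m + 1 := fun h => h2 (Fin.ext h)
          by_cases h3 : (i : ℕ) ≤ (k : ℕ) ∧ (k : ℕ) < (i : ℕ) + m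
          · rw [if_pos (by omega), if_pos h3]
          · rw [if_neg (by omega), if_neg h3, if_neg (by omega), if_neg (by omega)]
    rw [key, ih hm']

lemma bkl_fix {G : Type*} [Group G] {n : ℕ}
    (ρ : BraidGroup n →* Equiv.Perm (Fin n → G))
    (hρ : ∀ (i : Fin (n - 1)) (x : Fin n → G), ρ (braidGen i) x = hurwitzMove i x)
    (g : Fin n → G) (i j : Fin n) (hij : i < j) (hg : g i = g j) :
    ρ (bkl n i j) g = g := by
  have hij' : (i : ℕ) < (j : ℕ) := hij
  have hjn : (j : ℕ) < n := j.isLt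
  set M := (j : ℕ) - 1 - (i : ℕ) with hM
  have hPH := prod_Htup ρ hρ g i j hij' M le_rfl
  unfold bkl
  rw [map_mul, map_mul, map_inv, Equiv.Perm.mul_apply, Equiv.Perm.mul_apply]
  have hinv : (ρ (((List.range M).map fun t => braidGen' n ((i : ℕ) + t)).prod))⁻¹ g
      = Htup g i M := by
    rw [Equiv.Perm.inv_def, Equiv.symm_apply_eq]
    exact hPH.symm
  rw [hinv]
  have hlt : (j : ℕ) - 1 < n - 1 := by omega
  have hgen : braidGen' n ((j : ℕ) - 1) = braidGen ⟨(j : ℕ) - 1, hlt⟩ := dif_pos hlt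
  rw [hgen, hρ]
  have hfix : hurwitzMove ⟨(j : ℕ) - 1, hlt⟩ (Htup g i M) = Htup g i M := by
    apply hurwitzMove_fix
    have e1 : finLo (⟨(j : ℕ) - 1, hlt⟩ : Fin (n - 1)) = (⟨(j : ℕ) - 1, by omega⟩ : Fin n) :=
      rfl
    have e2 : finHi (⟨(j : ℕ) - 1, hlt⟩ : Fin (n - 1)) = j := Fin.ext (by
      show (j : ℕ) - 1 + 1 = (j : ℕ); omega)
    rw [e1, e2]
    unfold Htup
    rw [if_neg (by simp only [Fin.val_mk]; omega), if_pos (by simp only [Fin.val_mk]; omega),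
      if_neg (by omega), if_neg (by omega), ← hg]
  rw [hfix, hPH]

/-- **Lemma.** For `g ∈ G^n`, the Young subgroup `B_{Q^g}` — the subgroup of `B_n`
generated by all Birman–Ko–Lee generators `a_{ij}` (for strands `i < j`) with `g_i = g_j` —
is contained in the stabilizer of `g` under the Hurwitz action of `B_n` on `G^n`
(given by `ρ` with `ρ(σ_i) = hurwitzMove i`). -/
theorem young_le_stabilizer {G : Type*} [Group G] {n : ℕ} (hn : 1 ≤ n)
    (ρ : BraidGroup n →* Equiv.Perm (Fin n → G))
    (hρ : ∀ (i : Fin (n - 1)) (x : Fin n → G), ρ (braidGen i) x = hurwitzMove i x)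
    (g : Fin n → G) :
    ∀ b ∈ Subgroup.closure
        {b : BraidGroup n | ∃ i j : Fin n, i < j ∧ g i = g j ∧ b = bkl n i j},
      ρ b g = g := by
  intro b hb
  induction hb using Subgroup.closure_induction with
  | mem x hx =>
    obtain ⟨i, j, hij, hg, rfl⟩ := hx
    exact bkl_fix ρ hρ g i j hij hg
  | one => simp
  | mul x y _ _ hx hy => rw [map_mul, Equiv.Perm.mul_apply, hy, hx]
  | inv x _ hx =>
    rw [map_inv]
    nth_rewrite 1 [← hx]
    simp
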